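/- Let n ≥ 1, let S be a symmetric positive definite real n×n matrix, and let C ⊆ ℝⁿ be a nonempty closed convex set with 0 ∈ C. Then for every z ∈ ℝⁿ there exists a unique z̄ ∈ ℝⁿ such that ψ(z) = ½ ⟨S(z − z̄), z − z̄⟩ + h(z̄); moreover S(z − z̄) ∈ C and S(z − z̄) is the unique minimizer over C of the function q ↦ ⟨S⁻¹(q − S z), q − S z⟩. -/

import Mathlib

open Matrix
open scoped RealInnerProductSpace

section helpers
variable {n : ℕ}

lemma aux_pos {S : Matrix (Fin n) (Fin n) ℝ} (hS : S.PosDef)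
    {x : EuclideanSpace ℝ (Fin n)} (hx : x ≠ 0) : 0 < ⟪x, toEuclideanLin S x⟫ := by
  have h := hS.dotProduct_mulVec_pos (x := (WithLp.equiv 2 _) x) (by simpa using hx)
  simpa [toEuclideanLin_apply, PiLp.inner_apply, dotProduct, mulVec, mul_comm] using h

lemma aux_nonneg {S : Matrix (Fin n) (Fin n) ℝ} (hS : S.PosDef)
    (x : EuclideanSpace ℝ (Fin n)) : 0 ≤ ⟪x, toEuclideanLin S x⟫ := by
  rcases eq_or_ne x 0 with rfl | hx
  · simp
  · exact (aux_pos hS hx).le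

lemma aux_symm {S : Matrix (Fin n) (Fin n) ℝ} (hS : S.IsHermitian)
    (x y : EuclideanSpace ℝ (Fin n)) :
    ⟪toEuclideanLin S x, y⟫ = ⟪x, toEuclideanLin S y⟫ :=
  (Matrix.isHermitian_iff_isSymmetric.1 hS) x y

lemma aux_coercive (hn : 1 ≤ n) {S : Matrix (Fin n) (Fin n) ℝ} (hS : S.PosDef) :
    ∃ c > (0:ℝ), ∀ x : EuclideanSpace ℝ (Fin n), c * ‖x‖ ^ 2 ≤ ⟪x, toEuclideanLin S x⟫ := by
  set T := toEuclideanLin S with hT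
  have hTc : Continuous T := T.continuous_of_finiteDimensional
  have hg : Continuous fun x : EuclideanSpace ℝ (Fin n) => ⟪x, T x⟫ :=
    continuous_id.inner hTc
  have hsph : (Metric.sphere (0 : EuclideanSpace ℝ (Fin n)) 1).Nonempty := by
    refine ⟨EuclideanSpace.single ⟨0, hn⟩ (1:ℝ), ?_⟩
    simp [EuclideanSpace.norm_single]
  obtain ⟨x0, hx0, hmin⟩ := (isCompact_sphere (0 : EuclideanSpace ℝ (Fin n)) 1).exists_isMinOn
    hsph hg.continuousOn
  have hx0ne : x0 ≠ 0 := by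
    intro h; rw [h] at hx0; simp at hx0
  refine ⟨⟪x0, T x0⟫, aux_pos hS hx0ne, fun x => ?_⟩
  rcases eq_or_ne x 0 with rfl | hx
  · simp
  · have hnx : (0:ℝ) < ‖x‖ := norm_pos_iff.2 hx
    set u : EuclideanSpace ℝ (Fin n) := ‖x‖⁻¹ • x with hu
    have hun : u ∈ Metric.sphere 0 1 := by
      simp [hu, norm_smul, abs_of_pos (inv_pos.2 hnx), inv_mul_cancel₀ hnx.ne']
    have h1 : ⟪x0, T x0⟫ ≤ ⟪u, T u⟫ := hmin hun
    have h2 : ⟪u, T u⟫ = ‖x‖⁻¹ ^ 2 * ⟪x, T x⟫ := by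
      rw [hu, T.map_smul, real_inner_smul_left, real_inner_smul_right]; ring
    have h3 : 0 ≤ ⟪x, T x⟫ := aux_nonneg hS x
    rw [h2] at h1
    have h4 := mul_le_mul_of_nonneg_left h1 (le_of_lt (pow_pos hnx 2))
    have h5 : ‖x‖ ^ 2 * (‖x‖⁻¹ ^ 2 * ⟪x, T x⟫) = ⟪x, T x⟫ := by
      field_simp
    nlinarith [h4, h5]

lemma aux_expand {S : Matrix (Fin n) (Fin n) ℝ} (hS : S.IsHermitian)
    (x v : EuclideanSpace ℝ (Fin n)) (t : ℝ) :
    ⟪toEuclideanLin S (x + t • v), x + t • v⟫ =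
      ⟪toEuclideanLin S x, x⟫ + 2 * t * ⟪toEuclideanLin S x, v⟫
        + t ^ 2 * ⟪toEuclideanLin S v, v⟫ := by
  set A := toEuclideanLin S with hA
  have hsy : ⟪A v, x⟫ = ⟪A x, v⟫ := by
    rw [aux_symm hS, real_inner_comm]
  rw [map_add, A.map_smul, inner_add_left, inner_add_right, inner_add_right,
    real_inner_smul_left, real_inner_smul_left, real_inner_smul_right, real_inner_smul_right]
  linear_combination t * hsy

lemma aux_proj (hn : 1 ≤ n) {S : Matrix (Fin n) (Fin n) ℝ} (hS : S.PosDef)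
    {C : Set (EuclideanSpace ℝ (Fin n))} (hCne : C.Nonempty) (hCcl : IsClosed C)
    (b : EuclideanSpace ℝ (Fin n)) :
    ∃ p ∈ C, ∀ q ∈ C,
      ⟪toEuclideanLin S (p - b), p - b⟫ ≤ ⟪toEuclideanLin S (q - b), q - b⟫ := by
  set A := toEuclideanLin S with hA
  set f : EuclideanSpace ℝ (Fin n) → ℝ := fun q => ⟪A (q - b), q - b⟫ with hf
  obtain ⟨c, hc, hcoer⟩ := aux_coercive hn hS
  have hfc : Continuous f := by
    have hAc : Continuous A := A.continuous_of_finiteDimensional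
    exact ((hAc.comp (continuous_id.sub continuous_const))).inner
      (continuous_id.sub continuous_const)
  obtain ⟨q0, hq0⟩ := hCne
  have hfq0 : 0 ≤ f q0 := by simp only [hf]; rw [real_inner_comm]; exact aux_nonneg hS _
  set r : ℝ := max ‖q0 - b‖ (Real.sqrt (f q0 / c)) with hr
  set K := C ∩ Metric.closedBall b r with hK
  have hKne : q0 ∈ K := ⟨hq0, by
    simp only [Metric.mem_closedBall, dist_eq_norm]
    exact le_max_left _ _⟩
  have hKcp : IsCompact K := by
    apply Metric.isCompact_of_isClosed_isBounded (hCcl.inter Metric.isClosed_closedBall)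
    exact Metric.isBounded_closedBall.subset Set.inter_subset_right
  obtain ⟨p, hpK, hpmin⟩ := hKcp.exists_isMinOn ⟨q0, hKne⟩ hfc.continuousOn
  refine ⟨p, hpK.1, fun q hq => ?_⟩
  by_cases hqK : q ∈ Metric.closedBall b r
  · exact hpmin ⟨hq, hqK⟩
  · have hqr : r < ‖q - b‖ := by
      simpa [dist_eq_norm] using not_le.1 (fun h => hqK (Metric.mem_closedBall.2 (by
        simpa [dist_eq_norm] using h)))
    have hsq : Real.sqrt (f q0 / c) ≤ r := le_max_right _ _
    have h1 : f q0 ≤ c * ‖q - b‖ ^ 2 := by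
      have h2 : Real.sqrt (f q0 / c) < ‖q - b‖ := lt_of_le_of_lt hsq hqr
      have h3 : f q0 / c < ‖q - b‖ ^ 2 := by
        have := Real.sq_sqrt (div_nonneg hfq0 hc.le)
        nlinarith [Real.sqrt_nonneg (f q0 / c), h2]
      calc f q0 = c * (f q0 / c) := by field_simp
        _ ≤ c * ‖q - b‖ ^ 2 := by nlinarith
    have h4 : f p ≤ f q0 := hpmin hKne
    calc f p ≤ f q0 := h4
      _ ≤ c * ‖q - b‖ ^ 2 := h1
      _ ≤ ⟪q - b, A (q - b)⟫ := hcoer _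
      _ = f q := by rw [hf]; exact (real_inner_comm _ _)

lemma aux_vi {S : Matrix (Fin n) (Fin n) ℝ} (hS : S.PosDef)
    {C : Set (EuclideanSpace ℝ (Fin n))} (hCco : Convex ℝ C)
    {b p : EuclideanSpace ℝ (Fin n)} (hp : p ∈ C)
    (hmin : ∀ q ∈ C, ⟪toEuclideanLin S (p - b), p - b⟫ ≤ ⟪toEuclideanLin S (q - b), q - b⟫) :
    ∀ q ∈ C, 0 ≤ ⟪toEuclideanLin S (p - b), q - p⟫ := by
  intro q hq
  set A := toEuclideanLin S with hA
  set v := q - p with hv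
  set a := ⟪A (p - b), v⟫ with ha
  set bb := ⟪A v, v⟫ with hbb
  have hkey : ∀ t : ℝ, 0 < t → t ≤ 1 → 0 ≤ 2 * a + t * bb := by
    intro t ht ht1
    have hmem : p + t • v ∈ C := by
      have := hCco hp hq (by linarith : (0:ℝ) ≤ 1 - t) ht.le (by ring)
      convert this using 1
      rw [hv]
      module
    have h1 := hmin _ hmem
    have h2 : p + t • v - b = (p - b) + t • v := by abel
    rw [h2, aux_expand hS.1] at h1
    nlinarith
  have hbbnn : 0 ≤ bb := by
    have := aux_nonneg hS v
    rwa [real_inner_comm] at this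
  by_contra hcon
  push_neg at hcon
  rcases eq_or_lt_of_le hbbnn with hbe | hbp
  · have := hkey 1 one_pos le_rfl
    nlinarith
  · have ht0 : 0 < min 1 (-a / bb) := lt_min one_pos (div_pos (by linarith) hbp)
    have := hkey _ ht0 (min_le_left _ _)
    have h5 : min 1 (-a / bb) * bb ≤ (-a / bb) * bb :=
      mul_le_mul_of_nonneg_right (min_le_right _ _) hbbnn
    have h6 : (-a / bb) * bb = -a := by field_simp
    nlinarith

end helpers

/-- The support function `h(z) = sup_{q ∈ C} ⟨q, z⟩`, with values in `[0, +∞]` (extended reals). -/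
noncomputable def hsupp {n : ℕ} (C : Set (EuclideanSpace ℝ (Fin n)))
    (z : EuclideanSpace ℝ (Fin n)) : EReal :=
  ⨆ q ∈ C, ((⟪q, z⟫ : ℝ) : EReal)

/-- The infimal convolution
`ψ(z) = inf_{z'} { ½ ⟨S(z - z'), z - z'⟩ + h(z') }`. -/
noncomputable def psi {n : ℕ} (S : Matrix (Fin n) (Fin n) ℝ)
    (C : Set (EuclideanSpace ℝ (Fin n))) (z : EuclideanSpace ℝ (Fin n)) : EReal :=
  ⨅ z' : EuclideanSpace ℝ (Fin n),
    (((2⁻¹ * ⟪Matrix.toEuclideanLin S (z - z'), z - z'⟫ : ℝ) : EReal) + hsupp C z')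

theorem stmt17 {n : ℕ} (hn : 1 ≤ n) (S : Matrix (Fin n) (Fin n) ℝ) (hS : S.PosDef)
    (C : Set (EuclideanSpace ℝ (Fin n))) (hCne : C.Nonempty) (hCcl : IsClosed C)
    (hCco : Convex ℝ C) (hC0 : (0 : EuclideanSpace ℝ (Fin n)) ∈ C)
    (z : EuclideanSpace ℝ (Fin n)) :
    (∃! zbar : EuclideanSpace ℝ (Fin n),
        psi S C z =
          ((2⁻¹ * ⟪Matrix.toEuclideanLin S (z - zbar), z - zbar⟫ : ℝ) : EReal) +
            hsupp C zbar) ∧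
      ∀ zbar : EuclideanSpace ℝ (Fin n),
        psi S C z =
            ((2⁻¹ * ⟪Matrix.toEuclideanLin S (z - zbar), z - zbar⟫ : ℝ) : EReal) +
              hsupp C zbar →
          Matrix.toEuclideanLin S (z - zbar) ∈ C ∧
          (∀ q ∈ C,
            ⟪Matrix.toEuclideanLin S⁻¹
                (Matrix.toEuclideanLin S (z - zbar) - Matrix.toEuclideanLin S z),
              Matrix.toEuclideanLin S (z - zbar) - Matrix.toEuclideanLin S z⟫ ≤
              ⟪Matrix.toEuclideanLin S⁻¹ (q - Matrix.toEuclideanLin S z),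
                q - Matrix.toEuclideanLin S z⟫) ∧
          (∀ q ∈ C,
            ⟪Matrix.toEuclideanLin S⁻¹ (q - Matrix.toEuclideanLin S z),
                q - Matrix.toEuclideanLin S z⟫ =
              ⟪Matrix.toEuclideanLin S⁻¹
                  (Matrix.toEuclideanLin S (z - zbar) - Matrix.toEuclideanLin S z),
                Matrix.toEuclideanLin S (z - zbar) - Matrix.toEuclideanLin S z⟫ →
              q = Matrix.toEuclideanLin S (z - zbar)) := by
  classical
  have hdet : IsUnit S.det := hS.det_pos.ne'.isUnit
  have hSinv : (S⁻¹).PosDef := hS.inv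
  have hAT : ∀ x, toEuclideanLin S⁻¹ (toEuclideanLin S x) = x := by
    intro x
    apply (WithLp.equiv 2 _).injective
    simp [toEuclideanLin_apply, mulVec_mulVec, Matrix.nonsing_inv_mul _ hdet]
  have hTA : ∀ x, toEuclideanLin S (toEuclideanLin S⁻¹ x) = x := by
    intro x
    apply (WithLp.equiv 2 _).injective
    simp [toEuclideanLin_apply, mulVec_mulVec, Matrix.mul_nonsing_inv _ hdet]
  have hsymT := aux_symm hS.1
  have hposT : ∀ u : EuclideanSpace ℝ (Fin n), u ≠ 0 → 0 < ⟪toEuclideanLin S u, u⟫ := by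
    intro u hu
    rw [real_inner_comm]
    exact aux_pos hS hu
  obtain ⟨p, hpC, hpmin⟩ := aux_proj hn hSinv hCne hCcl (toEuclideanLin S z)
  have hvi := aux_vi hSinv hCco hpC hpmin
  set zb : EuclideanSpace ℝ (Fin n) := z - toEuclideanLin S⁻¹ p with hzb
  have hTzb : toEuclideanLin S (z - zb) = p := by
    rw [hzb, sub_sub_cancel, hTA]
  have hTzb' : toEuclideanLin S zb = toEuclideanLin S z - p := by
    rw [hzb, map_sub, hTA]
  have hApTz : toEuclideanLin S⁻¹ (p - toEuclideanLin S z) = -zb := by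
    have : p - toEuclideanLin S z = -(toEuclideanLin S zb) := by rw [hTzb']; abel
    rw [this, map_neg, hAT]
  have hsup_pt : ∀ q ∈ C, ⟪q, zb⟫ ≤ ⟪p, zb⟫ := by
    intro q hq
    have h := hvi q hq
    rw [hApTz, inner_neg_left] at h
    have h2 : ⟪zb, q - p⟫ ≤ 0 := by linarith
    rw [real_inner_comm, inner_sub_left] at h2
    linarith
  have hsupzb : hsupp C zb = ((⟪p, zb⟫ : ℝ) : EReal) := by
    simp only [hsupp]
    apply le_antisymm
    · exact iSup₂_le fun q hq => EReal.coe_le_coe_iff.2 (hsup_pt q hq)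
    · exact le_iSup₂ (f := fun q (_ : q ∈ C) => ((⟪q, zb⟫ : ℝ) : EReal)) p hpC
  set c : ℝ := 2⁻¹ * ⟪toEuclideanLin S (z - zb), z - zb⟫ + ⟪p, zb⟫ with hc
  have hkey : ∀ w : EuclideanSpace ℝ (Fin n),
      2⁻¹ * ⟪toEuclideanLin S (z - w), z - w⟫ + ⟪p, w⟫
        = c + 2⁻¹ * ⟪toEuclideanLin S (w - zb), w - zb⟫ := by
    intro w
    have hw : z - w = (z - zb) - (w - zb) := by abel
    have e1 : ⟪toEuclideanLin S (w - zb), z - zb⟫ = ⟪p, w - zb⟫ := by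
      rw [hsymT, hTzb]
      exact real_inner_comm _ _
    have e2 : ⟪toEuclideanLin S (z - zb), w - zb⟫ = ⟪p, w - zb⟫ := by rw [hTzb]
    have hxv : (z - zb) + (-1 : ℝ) • (w - zb) = z - w := by module
    have h1 := aux_expand hS.1 (z - zb) (w - zb) (-1)
    rw [hxv, e2] at h1
    have h3 : ⟪p, w⟫ = ⟪p, zb⟫ + ⟪p, w - zb⟫ := by
      rw [← inner_add_right]
      congr 1
      abel
    rw [h1, h3, hc]
    ring
  have hpsi : psi S C z = (c : EReal) := by
    apply le_antisymm
    · have h := iInf_le (fun z' : EuclideanSpace ℝ (Fin n) =>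
        (((2⁻¹ * ⟪Matrix.toEuclideanLin S (z - z'), z - z'⟫ : ℝ) : EReal) + hsupp C z')) zb
      simp only [psi]
      refine le_trans h ?_
      rw [hsupzb, ← EReal.coe_add, hc]
    · simp only [psi]
      apply le_iInf
      intro w
      calc (c : EReal)
          ≤ ((2⁻¹ * ⟪toEuclideanLin S (z - w), z - w⟫ + ⟪p, w⟫ : ℝ) : EReal) := by
            apply EReal.coe_le_coe_iff.2
            rw [hkey w]
            have := hposT (w - zb)
            rcases eq_or_ne (w - zb) 0 with h0 | h0
            · rw [h0]; simp
            · linarith [this h0]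
        _ = ((2⁻¹ * ⟪toEuclideanLin S (z - w), z - w⟫ : ℝ) : EReal) + ((⟪p, w⟫ : ℝ) : EReal) :=
            EReal.coe_add _ _
        _ ≤ ((2⁻¹ * ⟪toEuclideanLin S (z - w), z - w⟫ : ℝ) : EReal) + hsupp C w := by
            apply add_le_add_right
            simp only [hsupp]
            exact le_iSup₂ (f := fun q (_ : q ∈ C) => ((⟪q, w⟫ : ℝ) : EReal)) p hpC
  have huniq : ∀ w : EuclideanSpace ℝ (Fin n),
      psi S C z = ((2⁻¹ * ⟪toEuclideanLin S (z - w), z - w⟫ : ℝ) : EReal) + hsupp C w →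
        w = zb := by
    intro w hw
    rw [hpsi] at hw
    have hge0 : (0 : EReal) ≤ hsupp C w := by
      simp only [hsupp]
      have h := le_iSup₂ (f := fun q (_ : q ∈ C) => ((⟪q, w⟫ : ℝ) : EReal)) 0 hC0
      simpa using h
    have hnebot : hsupp C w ≠ ⊥ := by
      intro h
      rw [h] at hge0
      simp at hge0
    have hnetop : hsupp C w ≠ ⊤ := by
      intro h
      have htop : ((2⁻¹ * ⟪toEuclideanLin S (z - w), z - w⟫ : ℝ) : EReal) + ⊤ = ⊤ :=
        EReal.add_top_of_ne_bot (EReal.coe_ne_bot _)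
      rw [h, htop] at hw
      exact EReal.coe_ne_top c hw
    have hvr : hsupp C w = ((hsupp C w).toReal : EReal) := (EReal.coe_toReal hnetop hnebot).symm
    set r : ℝ := (hsupp C w).toReal with hrdef
    rw [hvr, ← EReal.coe_add] at hw
    have hreal : c = 2⁻¹ * ⟪toEuclideanLin S (z - w), z - w⟫ + r := EReal.coe_eq_coe_iff.1 hw
    have hrge : ⟪p, w⟫ ≤ r := by
      have h := le_iSup₂ (f := fun q (_ : q ∈ C) => ((⟪q, w⟫ : ℝ) : EReal)) p hpC
      rw [show (⨆ q ∈ C, ((⟪q, w⟫ : ℝ) : EReal)) = hsupp C w from rfl, hvr] at h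
      exact EReal.coe_le_coe_iff.1 h
    have hk := hkey w
    by_contra hne
    have h0 : w - zb ≠ 0 := sub_ne_zero.2 hne
    have hP := hposT _ h0
    linarith
  refine ⟨⟨zb, ?_, fun w hw => huniq w hw⟩, ?_⟩
  · show psi S C z = _
    rw [hpsi, hsupzb, ← EReal.coe_add, hc]
  · intro w hw
    have hwe := huniq w hw
    subst hwe
    rw [hTzb]
    refine ⟨hpC, fun q hq => hpmin q hq, fun q hq heq => ?_⟩
    have hexp := aux_expand hSinv.1 (p - toEuclideanLin S z) (q - p) 1
    have h2 : (p - toEuclideanLin S z) + (1 : ℝ) • (q - p) = q - toEuclideanLin S z := by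
      rw [one_smul]; abel
    rw [h2] at hexp
    have hviq := hvi q hq
    have hqp : ⟪toEuclideanLin S⁻¹ (q - p), q - p⟫ ≤ 0 := by nlinarith [hexp, heq, hviq]
    have : q - p = 0 := by
      by_contra h0
      have := aux_pos hSinv h0
      rw [real_inner_comm] at this
      linarith
    rw [sub_eq_zero] at this
    exact this
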